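/- Let F = (F_1,…,F_T) be a T-tuple of subsets of [n] with coverage values v_i = 1 + |{t : i ∈ F_t}|, and let X ⊆ [n], t ∈ [T]. Define φ(G) = ∑_{i=1}^n log(v_i(G)) for any tuple G, and let (X, F_{-t}) denote F with F_t replaced by X. Then φ(X, F_{-t}) - φ(F) ≥ ∑_{i∈X} 1/(v_i+1) - ∑_{j∈F_t} 1/(v_j - 1). -/

import Mathlib

/-- Coverage value of agent `i` under solution `F`. -/
def cov {n T : ℕ} (F : Fin T → Finset (Fin n)) (i : Fin n) : ℕ :=
  1 + (Finset.univ.filter fun t => i ∈ F t).card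

/-- Log social welfare of a solution. -/
noncomputable def phi {n T : ℕ} (F : Fin T → Finset (Fin n)) : ℝ :=
  ∑ i, Real.log (cov F i)

lemma log_inc_lb (c : ℝ) (hc : 1 ≤ c) :
    Real.log (c + 1) - Real.log c ≥ 1 / (c + 1) := by
  have h0 : (0:ℝ) < c := by linarith
  have h1 : (0:ℝ) < c + 1 := by linarith
  have h := Real.log_le_sub_one_of_pos (show (0:ℝ) < c / (c+1) by positivity)
  rw [Real.log_div h0.ne' h1.ne'] at h
  have h2 : c / (c+1) - 1 = -(1/(c+1)) := by field_simp; ring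
  linarith
 
lemma log_dec_lb (c : ℝ) (hc : 2 ≤ c) :
    Real.log (c - 1) - Real.log c ≥ -(1 / (c - 1)) := by
  have h0 : (0:ℝ) < c := by linarith
  have h1 : (0:ℝ) < c - 1 := by linarith
  have h := Real.log_le_sub_one_of_pos (show (0:ℝ) < c / (c-1) by positivity)
  rw [Real.log_div h0.ne' h1.ne'] at h
  have h2 : c / (c-1) - 1 = 1/(c-1) := by field_simp; ring
  linarith

theorem phi_update_lower_bound {n T : ℕ} (F : Fin T → Finset (Fin n))
    (X : Finset (Fin n)) (t : Fin T) :
    phi (Function.update F t X) - phi F ≥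
      (∑ i ∈ X, 1 / ((cov F i : ℝ) + 1)) -
        ∑ j ∈ F t, 1 / ((cov F j : ℝ) - 1) := by
  classical
  set F' := Function.update F t X with hF'
  -- decomposition of the filter card
  have hsplit : ∀ (G : Fin T → Finset (Fin n)) (i : Fin n),
      (Finset.univ.filter fun s => i ∈ G s).card =
        ((Finset.univ.erase t).filter fun s => i ∈ G s).card +
          (if i ∈ G t then 1 else 0) := by
    intro G i
    have hu : (Finset.univ : Finset (Fin T)) = insert t (Finset.univ.erase t) :=
      (Finset.insert_erase (Finset.mem_univ t)).symm
    conv_lhs => rw [hu]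
    rw [Finset.filter_insert]
    split_ifs with h
    · rw [Finset.card_insert_of_notMem (by simp)]
    · simp
  have herase : ∀ i : Fin n,
      ((Finset.univ.erase t).filter fun s => i ∈ F' s) =
        ((Finset.univ.erase t).filter fun s => i ∈ F s) := by
    intro i
    apply Finset.filter_congr
    intro s hs
    simp only [Finset.mem_erase] at hs
    rw [hF', Function.update_of_ne hs.1]
  have hFt : F' t = X := Function.update_self t X F
  -- pointwise bound
  have key : ∀ i : Fin n,
      Real.log (cov F' i) - Real.log (cov F i) ≥
        (if i ∈ X then 1 / ((cov F i : ℝ) + 1) else 0) -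
          (if i ∈ F t then 1 / ((cov F i : ℝ) - 1) else 0) := by
    intro i
    have h1 := hsplit F i
    have h2 := hsplit F' i
    rw [herase i, hFt] at h2
    have hc1 : (1:ℝ) ≤ (cov F i : ℝ) := by
      have : 1 ≤ cov F i := by simp [cov]
      exact_mod_cast this
    by_cases hx : i ∈ X <;> by_cases hf : i ∈ F t
    · -- both: cov unchanged
      have hcc : cov F' i = cov F i := by
        simp [cov, h1, h2, hx, hf]
      have hc2 : (2:ℝ) ≤ (cov F i : ℝ) := by
        have : 2 ≤ cov F i := by
          simp only [cov, h1, hf, if_true]; omega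
        exact_mod_cast this
      simp only [hx, hf, if_true, hcc]
      have : 1 / ((cov F i : ℝ) + 1) ≤ 1 / ((cov F i : ℝ) - 1) := by
        apply one_div_le_one_div_of_le <;> linarith
      linarith
    · -- in X, not in F t: cov increases by 1
      have hcc : cov F' i = cov F i + 1 := by
        simp [cov, h1, h2, hx, hf]; ring
      have hcast : (cov F' i : ℝ) = (cov F i : ℝ) + 1 := by
        rw [hcc]; push_cast; ring
      simp only [hx, hf, if_true, if_false, hcast, sub_zero]
      exact log_inc_lb _ hc1
    · -- not in X, in F t: cov decreases by 1
      have hcc : cov F i = cov F' i + 1 := by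
        simp [cov, h1, h2, hx, hf]; ring
      have hc2 : (2:ℝ) ≤ (cov F i : ℝ) := by
        have : 2 ≤ cov F i := by
          simp only [cov, h1, hf, if_true]; omega
        exact_mod_cast this
      have hcast : (cov F' i : ℝ) = (cov F i : ℝ) - 1 := by
        have : (cov F i : ℝ) = (cov F' i : ℝ) + 1 := by exact_mod_cast hcc
        linarith
      simp only [hx, hf, if_true, if_false, hcast, zero_sub]
      exact log_dec_lb _ hc2
    · have hcc : cov F' i = cov F i := by
        simp [cov, h1, h2, hx, hf]
      simp [hx, hf, hcc]
  have hXsum : (∑ i ∈ X, 1 / ((cov F i : ℝ) + 1)) =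
      ∑ i : Fin n, if i ∈ X then 1 / ((cov F i : ℝ) + 1) else 0 := by
    rw [Finset.sum_ite_mem, Finset.univ_inter]
  have hFsum : (∑ j ∈ F t, 1 / ((cov F j : ℝ) - 1)) =
      ∑ i : Fin n, if i ∈ F t then 1 / ((cov F i : ℝ) - 1) else 0 := by
    rw [Finset.sum_ite_mem, Finset.univ_inter]
  have hphi : phi F' - phi F =
      ∑ i : Fin n, (Real.log (cov F' i) - Real.log (cov F i)) := by
    rw [phi, phi, ← Finset.sum_sub_distrib]
  rw [hphi, hXsum, hFsum, ← Finset.sum_sub_distrib]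
  exact Finset.sum_le_sum fun i _ => key i
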